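/- Let m, n : ℝ³ → ℝ be continuously differentiable functions of (T,X,Y) solving the Pavlov equation system m_T = n_X and n_T = m_Y + m n_X − n m_X. Define v, w : ℝ⁶ → ℝ by v(t,x,y,z,s,r) = m(t+z, x+s, y) and w(t,x,y,z,s,r) = n(t+z, x+s, y). Then (v,w) solves the system (ma): v_t = w_x + w v_r − v w_r and w_z = v_y + v w_s − w v_s. -/

import Mathlib

/-- Partial derivative of `f : ℝⁿ → ℝ` in the `i`-th coordinate direction. -/
noncomputable def pd {n : ℕ} (i : Fin n) (f : (Fin n → ℝ) → ℝ) (x : Fin n → ℝ) : ℝ :=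
  fderiv ℝ f x (Pi.single i 1)

noncomputable def phiL : (Fin 6 → ℝ) →L[ℝ] (Fin 3 → ℝ) :=
  ContinuousLinearMap.pi
    ![((ContinuousLinearMap.proj 0 : (Fin 6 → ℝ) →L[ℝ] ℝ) + ContinuousLinearMap.proj 3),
      ((ContinuousLinearMap.proj 1 : (Fin 6 → ℝ) →L[ℝ] ℝ) + ContinuousLinearMap.proj 4),
      (ContinuousLinearMap.proj 2 : (Fin 6 → ℝ) →L[ℝ] ℝ)]

lemma phiL_apply (x : Fin 6 → ℝ) : phiL x = ![x 0 + x 3, x 1 + x 4, x 2] := by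
  funext i
  fin_cases i <;> simp [phiL]

lemma pd_comp (f : (Fin 3 → ℝ) → ℝ) (hf : ContDiff ℝ 1 f) (i : Fin 6) (x : Fin 6 → ℝ) :
    pd i (fun y => f (phiL y)) x = fderiv ℝ f (phiL x) (phiL (Pi.single i 1)) := by
  unfold pd
  rw [show (fun y => f (phiL y)) = f ∘ phiL from rfl,
    fderiv_comp x (hf.differentiable one_ne_zero).differentiableAt phiL.differentiableAt,
    phiL.fderiv]
  rfl

theorem stmt4 (m n : (Fin 3 → ℝ) → ℝ) (hm : ContDiff ℝ 1 m) (hn : ContDiff ℝ 1 n)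
    (hP1 : ∀ X : Fin 3 → ℝ, pd 0 m X = pd 1 n X)
    (hP2 : ∀ X : Fin 3 → ℝ, pd 0 n X = pd 2 m X + m X * pd 1 n X - n X * pd 1 m X)
    (v w : (Fin 6 → ℝ) → ℝ)
    (hvdef : ∀ x : Fin 6 → ℝ, v x = m ![x 0 + x 3, x 1 + x 4, x 2])
    (hwdef : ∀ x : Fin 6 → ℝ, w x = n ![x 0 + x 3, x 1 + x 4, x 2]) :
    (∀ x : Fin 6 → ℝ, pd 0 v x = pd 1 w x + w x * pd 5 v x - v x * pd 5 w x) ∧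
    (∀ x : Fin 6 → ℝ, pd 3 w x = pd 2 v x + v x * pd 4 w x - w x * pd 4 v x) := by
  have hv : v = fun y => m (phiL y) := by
    funext y; rw [hvdef, phiL_apply]
  have hw : w = fun y => n (phiL y) := by
    funext y; rw [hwdef, phiL_apply]
  have e0 : phiL (Pi.single (0 : Fin 6) 1) = Pi.single (0 : Fin 3) 1 := by
    rw [phiL_apply]; funext i; fin_cases i <;> simp
  have e1 : phiL (Pi.single (1 : Fin 6) 1) = Pi.single (1 : Fin 3) 1 := by
    rw [phiL_apply]; funext i; fin_cases i <;> simp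
  have e2 : phiL (Pi.single (2 : Fin 6) 1) = Pi.single (2 : Fin 3) 1 := by
    rw [phiL_apply]; funext i; fin_cases i <;> simp
  have e3 : phiL (Pi.single (3 : Fin 6) 1) = Pi.single (0 : Fin 3) 1 := by
    rw [phiL_apply]; funext i; fin_cases i <;> simp
  have e4 : phiL (Pi.single (4 : Fin 6) 1) = Pi.single (1 : Fin 3) 1 := by
    rw [phiL_apply]; funext i; fin_cases i <;> simp
  have e5 : phiL (Pi.single (5 : Fin 6) 1) = (0 : Fin 3 → ℝ) := by
    rw [phiL_apply]; funext i; fin_cases i <;> simp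
  subst hv hw
  constructor <;> intro x
  · rw [pd_comp m hm, pd_comp n hn, pd_comp m hm, pd_comp n hn, e0, e1, e5]
    simp only [map_zero, mul_zero]
    have := hP1 (phiL x)
    unfold pd at this
    linarith
  · rw [pd_comp n hn, pd_comp m hm, pd_comp n hn, pd_comp m hm, e3, e2, e4]
    have := hP2 (phiL x)
    unfold pd at this
    simp only []
    linarith
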